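/- In a cancellative Noetherian monoid, if two balanced elements δ and τ have a left-gcd δ ∧_L τ and a right-gcd δ ∧_R τ, then δ ∧_L τ = δ ∧_R τ, and this common element is itself balanced. -/

import Mathlib

namespace Garside

variable {M : Type*}

/-- left-divisibility -/
def LDvd [Monoid M] (a b : M) : Prop := ∃ c, b = a * c

/-- right-divisibility -/
def RDvd [Monoid M] (a b : M) : Prop := ∃ c, b = c * a

/-- Noetherian: lengths of factorizations into non-identity factors are bounded. -/
def NoetherianM (M : Type*) [Monoid M] : Prop :=
  ∀ g : M, ∃ N : ℕ, ∀ l : List M, l.prod = g → (∀ x ∈ l, x ≠ 1) → l.length ≤ N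

/-- balanced element: left divisors = right divisors -/
def Balanced [Monoid M] (δ : M) : Prop := ∀ g : M, LDvd g δ ↔ RDvd g δ

/-- the set of (left-)divisors of a (balanced) element -/
def D [Monoid M] (δ : M) : Set M := {g | LDvd g δ}

/-- atom of a monoid -/
def IsAtomM [Monoid M] (h : M) : Prop := h ≠ 1 ∧ ∀ g k : M, h = g * k → g = 1 ∨ k = 1

/-- support of a balanced element: atoms dividing it -/
def suppM [Monoid M] (δ : M) : Set M := {s | IsAtomM s ∧ LDvd s δ}

/-- A Garside monoid structure on a cancellative monoid. -/
structure GarsideMonoid (M : Type*) [CancelMonoid M] where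
  noeth : NoetherianM M
  wedgeL : M → M → M
  wedgeL_dvd_left : ∀ a b, LDvd (wedgeL a b) a
  wedgeL_dvd_right : ∀ a b, LDvd (wedgeL a b) b
  le_wedgeL : ∀ a b c, LDvd c a → LDvd c b → LDvd c (wedgeL a b)
  veeL : M → M → M
  dvd_veeL_left : ∀ a b, LDvd a (veeL a b)
  dvd_veeL_right : ∀ a b, LDvd b (veeL a b)
  veeL_le : ∀ a b c, LDvd a c → LDvd b c → LDvd (veeL a b) c
  wedgeR : M → M → M
  wedgeR_dvd_left : ∀ a b, RDvd (wedgeR a b) a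
  wedgeR_dvd_right : ∀ a b, RDvd (wedgeR a b) b
  le_wedgeR : ∀ a b c, RDvd c a → RDvd c b → RDvd c (wedgeR a b)
  veeR : M → M → M
  dvd_veeR_left : ∀ a b, RDvd a (veeR a b)
  dvd_veeR_right : ∀ a b, RDvd b (veeR a b)
  veeR_le : ∀ a b c, RDvd a c → RDvd b c → RDvd (veeR a b) c
  Δ : M
  balanced : Balanced Δ
  finD : (D Δ).Finite
  gen : Submonoid.closure (D Δ) = ⊤

variable [CancelMonoid M]

/-- head function (left) -/
def GarsideMonoid.αL (G : GarsideMonoid M) (w : M) : M := G.wedgeL w G.Δ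

/-- head function (right) -/
def GarsideMonoid.αR (G : GarsideMonoid M) (w : M) : M := G.wedgeR w G.Δ

/-- Garside submonoid: a sublattice submonoid closed under the head maps. -/
def IsGarsideSubmonoid (G : GarsideMonoid M) (H : Submonoid M) : Prop :=
  (∀ a ∈ H, ∀ b ∈ H,
      G.wedgeL a b ∈ H ∧ G.veeL a b ∈ H ∧ G.wedgeR a b ∈ H ∧ G.veeR a b ∈ H) ∧
  (∀ h ∈ H, G.αL h ∈ H ∧ G.αR h ∈ H)

/-- least upper bound of a set for left-divisibility -/
def IsLubL (S : Set M) (δ : M) : Prop :=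
  (∀ x ∈ S, LDvd x δ) ∧ ∀ c, (∀ x ∈ S, LDvd x c) → LDvd δ c

/-- least upper bound of a set for right-divisibility -/
def IsLubR (S : Set M) (δ : M) : Prop :=
  (∀ x ∈ S, RDvd x δ) ∧ ∀ c, (∀ x ∈ S, RDvd x c) → RDvd δ c

theorem aux_eq_one_of_sandwich {M : Type*} [CancelMonoid M] (hN : NoetherianM M)
    {a x y : M} (h : a = x * a * y) : x = 1 ∧ y = 1 := by
  have key : ∀ n : ℕ, a = x ^ n * a * y ^ n := by
    intro n
    induction n with
    | zero => simp
    | succ n ih =>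
      calc a = x * a * y := h
        _ = x * (x ^ n * a * y ^ n) * y := by rw [← ih]
        _ = x ^ (n + 1) * a * y ^ (n + 1) := by
            rw [pow_succ' x n, pow_succ y n]
            simp [mul_assoc]
  have hx : x = 1 := by
    by_contra hx
    obtain ⟨N, hNn⟩ := hN a
    have ha : a = x ^ (N + 1) * (a * y ^ (N + 1)) := by
      rw [← mul_assoc]; exact key (N + 1)
    by_cases hz : a * y ^ (N + 1) = 1
    · have : (List.replicate (N + 1) x).prod = a := by
        rw [List.prod_replicate, ha, hz, mul_one]
      have := hNn _ this (by intro z hz'; rw [List.eq_of_mem_replicate hz']; exact hx)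
      simp at this
    · have hprod : (List.replicate (N + 1) x ++ [a * y ^ (N + 1)]).prod = a := by
        rw [List.prod_append, List.prod_replicate, List.prod_singleton, ← ha]
      have := hNn _ hprod (by
        intro z hz'
        rcases List.mem_append.mp hz' with h1 | h1
        · rw [List.eq_of_mem_replicate h1]; exact hx
        · rw [List.mem_singleton.mp h1]; exact hz)
      simp at this
  refine ⟨hx, ?_⟩
  rw [hx, one_mul] at h
  exact (left_eq_mul.mp h)

theorem gcd_of_balanced_eq_and_balanced {M : Type*} [CancelMonoid M] (hN : NoetherianM M)
    (δ τ dL dR : M) (hδ : Balanced δ) (hτ : Balanced τ)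
    (hdL : LDvd dL δ ∧ LDvd dL τ ∧ ∀ c, LDvd c δ → LDvd c τ → LDvd c dL)
    (hdR : RDvd dR δ ∧ RDvd dR τ ∧ ∀ c, RDvd c δ → RDvd c τ → RDvd c dR) :
    dL = dR ∧ Balanced dL := by
  obtain ⟨hLδ, hLτ, hLmax⟩ := hdL
  obtain ⟨hRδ, hRτ, hRmax⟩ := hdR
  -- dL right-divides δ and τ, hence right-divides dR
  have h1 : RDvd dL dR := hRmax dL ((hδ dL).mp hLδ) ((hτ dL).mp hLτ)
  -- dR left-divides δ and τ, hence left-divides dL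
  have h2 : LDvd dR dL := hLmax dR ((hδ dR).mpr hRδ) ((hτ dR).mpr hRτ)
  obtain ⟨k, hk⟩ := h1  -- dR = k * dL
  obtain ⟨c, hc⟩ := h2  -- dL = dR * c
  have hsand : dR = k * dR * c := by
    calc dR = k * dL := hk
      _ = k * (dR * c) := by rw [hc]
      _ = k * dR * c := by rw [mul_assoc]
  obtain ⟨hk1, hc1⟩ := aux_eq_one_of_sandwich hN hsand
  have heq : dL = dR := by rw [hc, hc1, mul_one]
  refine ⟨heq, fun g => ?_⟩
  constructor
  · rintro ⟨u, hu⟩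
    have hgδ : LDvd g δ := by
      obtain ⟨v, hv⟩ := hLδ
      exact ⟨u * v, by rw [hv, hu, mul_assoc]⟩
    have hgτ : LDvd g τ := by
      obtain ⟨v, hv⟩ := hLτ
      exact ⟨u * v, by rw [hv, hu, mul_assoc]⟩
    have : RDvd g dR := hRmax g ((hδ g).mp hgδ) ((hτ g).mp hgτ)
    rwa [← heq] at this
  · rintro ⟨u, hu⟩
    have hgδ : RDvd g δ := by
      obtain ⟨v, hv⟩ := hRδ
      exact ⟨v * u, by rw [hv, ← heq, hu, mul_assoc]⟩
    have hgτ : RDvd g τ := by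
      obtain ⟨v, hv⟩ := hRτ
      exact ⟨v * u, by rw [hv, ← heq, hu, mul_assoc]⟩
    exact hLmax g ((hδ g).mpr hgδ) ((hτ g).mpr hgτ)
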